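/- If a finite simple graph G contains a complete subgraph B having at least one vertex adjacent in G only to other vertices of B, then m(G) = Σ_{v ∈ V(B)} m(G - N[v]), where m counts maximal independent sets. -/
import Mathlib


attribute [local instance] Classical.propDecidable

/-- `s` is an independent set of vertices of `G`. -/
def IsIndep {V : Type*} (G : SimpleGraph V) (s : Finset V) : Prop :=
  ∀ u ∈ s, ∀ v ∈ s, ¬ G.Adj u v

/-- `s` is a maximal independent set of vertices of `G`. -/
def IsMaxlIndep {V : Type*} (G : SimpleGraph V) (s : Finset V) : Prop :=
  IsIndep G s ∧ ∀ t : Finset V, IsIndep G t → s ⊆ t → s = t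

/-- `m(G)`: the number of maximal independent sets of `G`. -/
noncomputable def numMaxlIndep {V : Type*} [Fintype V] (G : SimpleGraph V) : ℕ :=
  Set.ncard {s : Finset V | IsMaxlIndep G s}

section Aux

variable {V : Type*} {G : SimpleGraph V} {v : V}

private def Pp (G : SimpleGraph V) (v : V) : V → Prop := fun u => u ≠ v ∧ ¬ G.Adj v u

/-- erase identity: for an independent set containing v, the non-v part lies in P. -/
private lemma map_subtype_eq_erase {s : Finset V} (hs : IsIndep G s) (hvs : v ∈ s) :
    (s.subtype (Pp G v)).map (Function.Embedding.subtype _) = s.erase v := by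
  rw [Finset.subtype_map]
  ext u
  simp only [Finset.mem_filter, Finset.mem_erase, Pp]
  constructor
  · rintro ⟨hu, hne, -⟩; exact ⟨hne, hu⟩
  · rintro ⟨hne, hu⟩; exact ⟨hu, hne, hs v hvs u hu⟩

private lemma subtype_map_subtype (t : Finset {u // Pp G v u}) :
    ((t.map (Function.Embedding.subtype _)).subtype (Pp G v)) = t := by
  ext a
  simp [Finset.mem_subtype, Finset.mem_map, Subtype.ext_iff, a.2]

private lemma subtype_insert_self (X : Finset V) :
    ((insert v X).subtype (Pp G v)) = X.subtype (Pp G v) := by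
  ext a
  simp only [Finset.mem_subtype, Finset.mem_insert]
  have : (a : V) ≠ v := a.2.1
  simp [this]

/-- inserting v into (the image of) an independent set of the induced graph gives
an independent set of G. -/
private lemma indep_insert {t : Finset {u // Pp G v u}}
    (ht : IsIndep (G.induce {u | Pp G v u}) t) :
    IsIndep G (insert v (t.map (Function.Embedding.subtype _))) := by
  intro x hx y hy hadj
  simp only [Finset.mem_insert, Finset.mem_map, Function.Embedding.coe_subtype] at hx hy
  rcases hx with rfl | ⟨a, ha, rfl⟩
  · rcases hy with rfl | ⟨b, hb, rfl⟩
    · exact G.irrefl hadj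
    · exact b.2.2 hadj
  · rcases hy with rfl | ⟨b, hb, rfl⟩
    · exact a.2.2 hadj.symm
    · exact ht a ha b hb hadj

private lemma indep_subtype {s : Finset V} (hs : IsIndep G s) :
    IsIndep (G.induce {u | Pp G v u}) (s.subtype (Pp G v)) := by
  intro a ha b hb hadj
  rw [Finset.mem_subtype] at ha hb
  exact hs a ha b hb hadj

/-- For any vertex v, maximal independent sets of G containing v are counted by
maximal independent sets of G - N[v]. -/
private lemma ncard_maxl_mem (G : SimpleGraph V) (v : V) :
    {s : Finset V | IsMaxlIndep G s ∧ v ∈ s}.ncard =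
      Set.ncard {t : Finset {u // Pp G v u} | IsMaxlIndep (G.induce {u | Pp G v u}) t} := by
  set H := G.induce {u | Pp G v u} with hH
  set f : Finset V → Finset {u // Pp G v u} := fun s => s.subtype (Pp G v) with hf
  have himg : {t : Finset {u // Pp G v u} | IsMaxlIndep H t} =
      f '' {s : Finset V | IsMaxlIndep G s ∧ v ∈ s} := by
    ext t
    simp only [Set.mem_setOf_eq, Set.mem_image]
    constructor
    · rintro ⟨ht, htmax⟩
      refine ⟨insert v (t.map (Function.Embedding.subtype _)), ⟨⟨indep_insert ht, ?_⟩, ?_⟩, ?_⟩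
      · intro s' hs' hsub
        -- s' independent containing insert v t-image; show equality
        have hvs' : v ∈ s' := hsub (Finset.mem_insert_self _ _)
        have h1 : t ⊆ s'.subtype (Pp G v) := by
          rw [← subtype_map_subtype (v := v) t]
          intro a ha
          rw [Finset.mem_subtype] at ha ⊢
          exact hsub (Finset.mem_insert_of_mem ha)
        have h2 : t = s'.subtype (Pp G v) := htmax _ (indep_subtype hs') h1
        -- now s' ⊆ insert v (t.map emb)
        apply Finset.Subset.antisymm hsub
        intro u hu
        rcases eq_or_ne u v with rfl | hne
        · exact Finset.mem_insert_self _ _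
        · have hp : Pp G v u := ⟨hne, hs' v hvs' u hu⟩
          apply Finset.mem_insert_of_mem
          rw [Finset.mem_map]
          refine ⟨⟨u, hp⟩, ?_, rfl⟩
          rw [h2, Finset.mem_subtype]
          exact hu
      · exact Finset.mem_insert_self _ _
      · rw [hf]
        simp only
        rw [subtype_insert_self, subtype_map_subtype]
    · rintro ⟨s, ⟨⟨hs, hsmax⟩, hvs⟩, rfl⟩
      constructor
      · exact indep_subtype hs
      · intro t ht hsub
        have h1 : s ⊆ insert v (t.map (Function.Embedding.subtype _)) := by
          intro u hu
          rcases eq_or_ne u v with rfl | hne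
          · exact Finset.mem_insert_self _ _
          · apply Finset.mem_insert_of_mem
            have : u ∈ (f s).map (Function.Embedding.subtype _) := by
              rw [hf]
              simp only
              rw [map_subtype_eq_erase hs hvs, Finset.mem_erase]
              exact ⟨hne, hu⟩
            rcases Finset.mem_map.1 this with ⟨a, ha, rfl⟩
            exact Finset.mem_map_of_mem _ (hsub ha)
        have h2 := hsmax _ (indep_insert ht) h1
        rw [hf]
        simp only
        rw [h2, subtype_insert_self, subtype_map_subtype]
  have hinj : Set.InjOn f {s : Finset V | IsMaxlIndep G s ∧ v ∈ s} := by
    rintro s ⟨⟨hs, -⟩, hvs⟩ s' ⟨⟨hs', -⟩, hvs'⟩ heq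
    have e1 : s.erase v = s'.erase v := by
      rw [← map_subtype_eq_erase hs hvs, ← map_subtype_eq_erase hs' hvs']
      exact congrArg _ heq
    have := congrArg (insert v) e1
    rwa [Finset.insert_erase hvs, Finset.insert_erase hvs'] at this
  rw [himg, Set.ncard_image_of_injOn hinj]

end Aux

/-- The m-recursion for a complete subgraph `B` with a vertex adjacent only to
vertices of `B`: `m(G) = Σ_{v ∈ B} m(G - N[v])`. -/
theorem stmt1 {V : Type*} [Fintype V] (G : SimpleGraph V) (B : Finset V)
    (hB : G.IsClique (B : Set V))
    (hv : ∃ v ∈ B, ∀ u : V, G.Adj v u → u ∈ B) :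
    numMaxlIndep G =
      ∑ v ∈ B, numMaxlIndep (G.induce {u | u ≠ v ∧ ¬ G.Adj v u}) := by
  classical
  -- every maximal independent set contains some vertex of B
  obtain ⟨v₀, hv₀B, hv₀N⟩ := hv
  have hmem : ∀ s : Finset V, IsMaxlIndep G s → ∃ w ∈ B, w ∈ s := by
    intro s ⟨hs, hsmax⟩
    by_contra h
    push_neg at h
    have hv₀s : v₀ ∉ s := h v₀ hv₀B
    have hind : IsIndep G (insert v₀ s) := by
      intro x hx y hy hadj
      rw [Finset.mem_insert] at hx hy
      rcases hx with rfl | hx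
      · rcases hy with rfl | hy
        · exact G.irrefl hadj
        · exact h y (hv₀N y hadj) hy
      · rcases hy with rfl | hy
        · exact h x (hv₀N x hadj.symm) hx
        · exact hs x hx y hy hadj
    have := hsmax _ hind (Finset.subset_insert _ _)
    exact hv₀s (this ▸ Finset.mem_insert_self v₀ s)
  -- the partition
  have hpart : (Set.toFinset {s : Finset V | IsMaxlIndep G s}) =
      B.biUnion (fun v => Set.toFinset {s : Finset V | IsMaxlIndep G s ∧ v ∈ s}) := by
    ext s
    simp only [Set.mem_toFinset, Set.mem_setOf_eq, Finset.mem_biUnion]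
    constructor
    · intro hs
      obtain ⟨w, hwB, hws⟩ := hmem s hs
      exact ⟨w, hwB, hs, hws⟩
    · rintro ⟨w, -, hs, -⟩
      exact hs
  have hdisj : ∀ x ∈ B, ∀ y ∈ B, x ≠ y →
      Disjoint (Set.toFinset {s : Finset V | IsMaxlIndep G s ∧ x ∈ s})
        (Set.toFinset {s : Finset V | IsMaxlIndep G s ∧ y ∈ s}) := by
    intro x hx y hy hxy
    rw [Finset.disjoint_left]
    intro s hs hs'
    simp only [Set.mem_toFinset, Set.mem_setOf_eq] at hs hs'
    exact hs.1.1 x hs.2 y hs'.2 (hB hx hy hxy)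
  have hG : numMaxlIndep G = (Set.toFinset {s : Finset V | IsMaxlIndep G s}).card := by
    rw [numMaxlIndep, Set.ncard_eq_toFinset_card']
  rw [hG, hpart, Finset.card_biUnion hdisj]
  refine Finset.sum_congr rfl ?_
  intro v hvB
  rw [← Set.ncard_eq_toFinset_card', ncard_maxl_mem G v, numMaxlIndep]
  rfl
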